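/- Let π : ℝ^d → (0,∞) be differentiable and satisfy the curvature condition limsup_{‖x‖→∞} ⟨x/‖x‖, ∇log π(x)/‖∇log π(x)‖⟩ < −2ε for some ε ∈ (0,1), valid for ‖x‖ ≥ M. Define W(x) = {x − t‖x‖ξ : 0 ≤ t ≤ ε²/4, ξ ∈ S^{d-1}, ‖ξ − x/‖x‖‖ ≤ ε}. Then for all x with ‖x‖ ≥ 2M and all y ∈ W(x) with y ≠ x, log(π(y)/π(x)) > 0. -/

import Mathlib

open MeasureTheory

/-- The cone-segment region `W(x) = {x − t‖x‖ξ : 0 ≤ t ≤ ε²/4, ‖ξ‖ = 1, ‖ξ − x/‖x‖‖ ≤ ε}`. -/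
def coneRegion {d : ℕ} (ε : ℝ) (x : EuclideanSpace ℝ (Fin d)) :
    Set (EuclideanSpace ℝ (Fin d)) :=
  {y | ∃ (t : ℝ) (ξ : EuclideanSpace ℝ (Fin d)), 0 ≤ t ∧ t ≤ ε ^ 2 / 4 ∧ ‖ξ‖ = 1 ∧
        ‖ξ - ‖x‖⁻¹ • x‖ ≤ ε ∧ y = x - (t * ‖x‖) • ξ}

lemma normalize_sub_le' {E : Type*} [NormedAddCommGroup E] [NormedSpace ℝ E]
    (a b : E) (ha : a ≠ 0) (hb : b ≠ 0) :
    ‖‖a‖⁻¹ • a - ‖b‖⁻¹ • b‖ ≤ 2 * ‖a - b‖ / ‖a‖ := by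
  have ha0 : (0:ℝ) < ‖a‖ := norm_pos_iff.mpr ha
  have hb0 : (0:ℝ) < ‖b‖ := norm_pos_iff.mpr hb
  have key : ‖a‖⁻¹ • a - ‖b‖⁻¹ • b = ‖a‖⁻¹ • (a - b) + (‖a‖⁻¹ - ‖b‖⁻¹) • b := by
    rw [smul_sub, sub_smul]; abel
  rw [key]
  have h1 : |‖b‖ - ‖a‖| ≤ ‖a - b‖ := by
    rw [norm_sub_rev]; exact abs_norm_sub_norm_le b a
  have e : ‖a‖⁻¹ - ‖b‖⁻¹ = (‖b‖ - ‖a‖) * (‖a‖⁻¹ * ‖b‖⁻¹) := by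
    field_simp
  calc ‖‖a‖⁻¹ • (a - b) + (‖a‖⁻¹ - ‖b‖⁻¹) • b‖
      ≤ ‖‖a‖⁻¹ • (a - b)‖ + ‖(‖a‖⁻¹ - ‖b‖⁻¹) • b‖ := norm_add_le _ _
    _ ≤ ‖a - b‖ / ‖a‖ + ‖a - b‖ / ‖a‖ := by
        have t1 : ‖‖a‖⁻¹ • (a - b)‖ = ‖a - b‖ / ‖a‖ := by
          rw [norm_smul, norm_inv, norm_norm, div_eq_inv_mul]
        have t2 : ‖(‖a‖⁻¹ - ‖b‖⁻¹) • b‖ ≤ ‖a - b‖ / ‖a‖ := by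
          rw [norm_smul, Real.norm_eq_abs, e, abs_mul,
            abs_of_pos (by positivity : (0:ℝ) < ‖a‖⁻¹ * ‖b‖⁻¹)]
          calc |‖b‖ - ‖a‖| * (‖a‖⁻¹ * ‖b‖⁻¹) * ‖b‖
              ≤ ‖a - b‖ * (‖a‖⁻¹ * ‖b‖⁻¹) * ‖b‖ := by gcongr
            _ = ‖a - b‖ / ‖a‖ := by field_simp
        linarith
    _ = 2 * ‖a - b‖ / ‖a‖ := by ring


set_option maxHeartbeats 1000000 in
/-- Under the curvature condition `⟨x/‖x‖, ∇log π(x)/‖∇log π(x)‖⟩ < −2ε` for `‖x‖ ≥ M`,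
every `y ∈ W(x)` with `y ≠ x` and `‖x‖ ≥ 2M` satisfies `log(π(y)/π(x)) > 0`. -/
theorem log_ratio_pos_on_coneRegion
    {d : ℕ} (hd : 2 ≤ d)
    (π : EuclideanSpace ℝ (Fin d) → ℝ) (hπpos : ∀ x, 0 < π x)
    (hdiff : ∀ x, DifferentiableAt ℝ (fun y => Real.log (π y)) x)
    (ε M : ℝ) (hε : ε ∈ Set.Ioo (0:ℝ) 1) (hM : 0 < M)
    (hcurv : ∀ x : EuclideanSpace ℝ (Fin d), M ≤ ‖x‖ →
      (inner ℝ (‖x‖⁻¹ • x)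
        (‖gradient (fun y => Real.log (π y)) x‖⁻¹ •
          gradient (fun y => Real.log (π y)) x) : ℝ) < -2 * ε) :
    ∀ x : EuclideanSpace ℝ (Fin d), 2 * M ≤ ‖x‖ →
      ∀ y ∈ coneRegion ε x, y ≠ x → 0 < Real.log (π y / π x) := by
  obtain ⟨hεpos, hε1⟩ := hε
  set L : EuclideanSpace ℝ (Fin d) → ℝ := fun z => Real.log (π z) with hL
  set G := gradient L with hG
  intro x hx
  have hx0 : 0 < ‖x‖ := by linarith
  have hxne : x ≠ 0 := fun h => by rw [h, norm_zero] at hx0; exact lt_irrefl 0 hx0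
  rintro y ⟨t, ξ, ht0, ht1, hξ1, hξx, rfl⟩ hne
  have htpos : 0 < t := by
    rcases lt_or_eq_of_le ht0 with h | h
    · exact h
    · exfalso; apply hne; rw [← h]; simp
  -- inner product negativity on the segment
  have seg : ∀ s, 0 ≤ s → s ≤ t → (inner ℝ ξ (G (x - (s * ‖x‖) • ξ)) : ℝ) < 0 := by
    intro s hs0 hst
    set z := x - (s * ‖x‖) • ξ with hz
    have hst' : s ≤ ε ^ 2 / 4 := le_trans hst ht1
    have hxz : ‖x - z‖ = s * ‖x‖ := by
      rw [hz, sub_sub_cancel, norm_smul, Real.norm_eq_abs,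
        abs_of_nonneg (mul_nonneg hs0 hx0.le), hξ1, mul_one]
    have hε2 : ε ^ 2 ≤ ε := by nlinarith
    have hzn : (1 - ε ^ 2 / 4) * ‖x‖ ≤ ‖z‖ := by
      have h := norm_sub_norm_le x z
      nlinarith
    have hzM : M ≤ ‖z‖ := by nlinarith
    have hz0 : z ≠ 0 := fun h => by rw [h, norm_zero] at hzM; linarith
    have hcz := hcurv z hzM
    have hGz : G z ≠ 0 := by
      intro h
      rw [h] at hcz
      simp at hcz
      linarith
    have hGzpos : (0:ℝ) < ‖G z‖ := norm_pos_iff.mpr hGz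
    set m := ‖G z‖⁻¹ • G z with hm
    have hm1 : ‖m‖ = 1 := by
      rw [hm, norm_smul, norm_inv, norm_norm, inv_mul_cancel₀ (ne_of_gt hGzpos)]
    have hnorm : ‖‖x‖⁻¹ • x - ‖z‖⁻¹ • z‖ ≤ ε / 2 := by
      have h2 := normalize_sub_le' x z hxne hz0
      have h3 : 2 * ‖x - z‖ / ‖x‖ ≤ ε ^ 2 / 2 := by
        rw [div_le_iff₀ hx0]; rw [hxz]; nlinarith
      have h4 : ε ^ 2 / 2 ≤ ε / 2 := by linarith
      linarith
    have decomp : (inner ℝ ξ m : ℝ) =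
        inner ℝ (ξ - ‖x‖⁻¹ • x) m + inner ℝ (‖x‖⁻¹ • x - ‖z‖⁻¹ • z) m + inner ℝ (‖z‖⁻¹ • z) m := by
      rw [inner_sub_left, inner_sub_left]; ring
    have b1 : (inner ℝ (ξ - ‖x‖⁻¹ • x) m : ℝ) ≤ ε := by
      calc (inner ℝ (ξ - ‖x‖⁻¹ • x) m : ℝ) ≤ ‖ξ - ‖x‖⁻¹ • x‖ * ‖m‖ := real_inner_le_norm _ _
        _ ≤ ε := by rw [hm1, mul_one]; exact hξx
    have b2 : (inner ℝ (‖x‖⁻¹ • x - ‖z‖⁻¹ • z) m : ℝ) ≤ ε / 2 := by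
      calc (inner ℝ (‖x‖⁻¹ • x - ‖z‖⁻¹ • z) m : ℝ)
          ≤ ‖‖x‖⁻¹ • x - ‖z‖⁻¹ • z‖ * ‖m‖ := real_inner_le_norm _ _
        _ ≤ ε / 2 := by rw [hm1, mul_one]; exact hnorm
    have hmneg : (inner ℝ ξ m : ℝ) < 0 := by
      rw [decomp]; linarith
    have : (inner ℝ ξ (G z) : ℝ) = ‖G z‖ * inner ℝ ξ m := by
      rw [hm, real_inner_smul_right]
      field_simp
    rw [this]
    exact mul_neg_of_pos_of_neg hGzpos hmneg
  -- the function along the segment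
  set f : ℝ → ℝ := fun s => L (x - (s * ‖x‖) • ξ) with hf
  have hderiv : ∀ s : ℝ, HasDerivAt f
      (((InnerProductSpace.toDual ℝ _) (G (x - (s * ‖x‖) • ξ))) (-(‖x‖ • ξ))) s := by
    intro s
    have hγ : HasDerivAt (fun s : ℝ => x - (s * ‖x‖) • ξ) (-(‖x‖ • ξ)) s := by
      have h1 : HasDerivAt (fun s : ℝ => (s * ‖x‖) • ξ) (‖x‖ • ξ) s := by
        simpa using ((hasDerivAt_id s).mul_const ‖x‖).smul_const ξ
      simpa using h1.const_sub x
    exact ((hdiff _).hasGradientAt.hasFDerivAt).comp_hasDerivAt s hγ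
  have hcont : ContinuousOn f (Set.Icc 0 t) :=
    fun s _ => (hderiv s).differentiableAt.continuousAt.continuousWithinAt
  have hpos : ∀ s ∈ interior (Set.Icc (0:ℝ) t), 0 < deriv f s := by
    intro s hs
    rw [interior_Icc] at hs
    rw [(hderiv s).deriv, InnerProductSpace.toDual_apply_apply, inner_neg_right, inner_smul_right]
    have := seg s hs.1.le hs.2.le
    rw [real_inner_comm] at this
    have hx0' := hx0
    nlinarith
  have mono := strictMonoOn_of_deriv_pos (convex_Icc 0 t) hcont hpos
  have key := mono (Set.left_mem_Icc.mpr htpos.le) (Set.right_mem_Icc.mpr htpos.le) htpos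
  have hf0 : f 0 = L x := by simp [hf]
  rw [hf0] at key
  rw [Real.log_div (ne_of_gt (hπpos _)) (ne_of_gt (hπpos _))]
  exact sub_pos.mpr key
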